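/- For every ε > 0 there exist a holomorphic function f : B_{c₀} → ℂ with sup_{x ∈ B_{c₀}} |f(x)| ≤ 1 and a sequence (x_k)_{k≥1} in B_{c₀} converging to 0 in the weak topology σ(c₀, ℓ₁) such that lim_{k→∞} |f(x_k) − f(0)| exists and is greater than 2 − ε. (Consequently the point evaluation at 0 and any weak-star accumulation point of the evaluations at the x_k lie at Gleason distance 2 in the spectrum of H^∞(B_{c₀}), i.e., in different Gleason parts while in the same fiber over 0.) -/

import Mathlib

open Filter Topology Metric
open scoped ZeroAtInfty

noncomputable section


/-- evaluation at a coordinate as a CLM on c₀ -/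
def stmt14ev (n : ℕ) : C₀(ℕ, ℂ) →L[ℂ] ℂ :=
  LinearMap.mkContinuous
    { toFun := fun x => x n
      map_add' := fun x y => rfl
      map_smul' := fun c x => rfl } 1
    (fun x => by
      rw [one_mul]
      calc ‖x n‖ = ‖x.toBCF n‖ := rfl
        _ ≤ ‖x.toBCF‖ := x.toBCF.norm_coe_le_norm n
        _ = ‖x‖ := ZeroAtInftyContinuousMap.norm_toBCF_eq_norm)

theorem stmt14ev_apply (n : ℕ) (x : C₀(ℕ, ℂ)) : stmt14ev n x = x n := rfl

theorem stmt14ev_norm (n : ℕ) : ‖stmt14ev n‖ ≤ 1 :=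
  LinearMap.mkContinuous_norm_le _ zero_le_one _

/-- single bump -/
def stmt14bump (k : ℕ) (z : ℂ) : C₀(ℕ, ℂ) :=
  ⟨⟨fun n => if n = k then z else 0, continuous_of_discreteTopology⟩, by
    rw [cocompact_eq_atTop]
    refine Tendsto.congr' ?_ tendsto_const_nhds
    filter_upwards [eventually_gt_atTop k] with n hn
    simp [Nat.ne_of_gt hn |>.symm, (Nat.ne_of_gt hn)]⟩

theorem stmt14bump_apply (k n : ℕ) (z : ℂ) :
    stmt14bump k z n = if n = k then z else 0 := rfl

theorem stmt14bump_norm_le (k : ℕ) (z : ℂ) : ‖stmt14bump k z‖ ≤ ‖z‖ := by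
  rw [← ZeroAtInftyContinuousMap.norm_toBCF_eq_norm]
  refine BoundedContinuousFunction.norm_le (norm_nonneg z) |>.2 fun n => ?_
  by_cases h : n = k <;> simp [stmt14bump, h]
def stmt14g : ℂ → ℂ := fun z => (1 + z) / (1 - z)

theorem stmt14g_zero : stmt14g 0 = 1 := by simp [stmt14g]

theorem stmt14_one_sub_ne (z : ℂ) (hz : ‖z‖ < 1) : (1 : ℂ) - z ≠ 0 := by
  intro h
  rw [sub_eq_zero] at h
  rw [← h] at hz
  simp at hz

theorem stmt14_norm_one_sub_ge (z : ℂ) : 1 - ‖z‖ ≤ ‖(1 : ℂ) - z‖ := by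
  have := norm_sub_norm_le (1 : ℂ) z
  simpa using this

theorem stmt14g_norm_le (z : ℂ) (r : ℝ) (hr : r < 1) (hz : ‖z‖ ≤ r) :
    ‖stmt14g z‖ ≤ (1 + r) / (1 - r) := by
  have h1 : ‖(1 : ℂ) + z‖ ≤ 1 + r := by
    calc ‖(1:ℂ) + z‖ ≤ ‖(1:ℂ)‖ + ‖z‖ := norm_add_le _ _
      _ ≤ 1 + r := by rw [norm_one]; linarith
  have h2 : (1 : ℝ) - r ≤ ‖(1:ℂ) - z‖ := le_trans (by linarith) (stmt14_norm_one_sub_ge z)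
  have hr0 : (0:ℝ) ≤ r := le_trans (norm_nonneg z) hz
  rw [stmt14g, norm_div]
  exact div_le_div₀ (by linarith) h1 (by linarith) h2

theorem stmt14g_re_nonneg (z : ℂ) (hz : ‖z‖ < 1) : 0 ≤ (stmt14g z).re := by
  have hns : Complex.normSq z < 1 := by
    rw [← Complex.sq_norm]
    nlinarith [norm_nonneg z]
  rw [stmt14g, Complex.div_re]
  have h0 : (0:ℝ) ≤ Complex.normSq (1 - z) := Complex.normSq_nonneg _
  have hnum : ((1:ℂ) + z).re * ((1:ℂ) - z).re + ((1:ℂ)+z).im * ((1:ℂ)-z).im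
      = 1 - Complex.normSq z := by
    simp [Complex.normSq_apply]
    ring
  have : 0 ≤ (1 - Complex.normSq z) / Complex.normSq (1 - z) := div_nonneg (by linarith) h0
  calc (0:ℝ) ≤ (1 - Complex.normSq z) / Complex.normSq (1-z) := this
    _ = _ := by rw [← hnum]; ring

theorem stmt14g_hasDerivAt (z : ℂ) (hz : ‖z‖ < 1) :
    HasDerivAt stmt14g (2 / (1 - z) ^ 2) z := by
  have hne := stmt14_one_sub_ne z hz
  have h1 : HasDerivAt (fun w : ℂ => 1 + w) 1 z := (hasDerivAt_id z).const_add 1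
  have h2 : HasDerivAt (fun w : ℂ => 1 - w) (-1) z := (hasDerivAt_id z).const_sub 1
  have := h1.div h2 hne
  refine HasDerivAt.congr_deriv this ?_
  ring

theorem stmt14g_deriv_norm_le (z : ℂ) (r : ℝ) (hr : r < 1) (hz : ‖z‖ ≤ r) :
    ‖(2 : ℂ) / (1 - z) ^ 2‖ ≤ 2 / (1 - r) ^ 2 := by
  have h2 : (1 : ℝ) - r ≤ ‖(1:ℂ) - z‖ := le_trans (by linarith) (stmt14_norm_one_sub_ge z)
  rw [norm_div, norm_pow]
  have hpos : (0:ℝ) < 1 - r := by linarith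
  have : (1 - r)^2 ≤ ‖(1:ℂ) - z‖ ^ 2 := by nlinarith [norm_nonneg ((1:ℂ) - z)]
  have h2' : ‖(2:ℂ)‖ = 2 := by norm_num
  rw [h2']
  exact div_le_div₀ (by norm_num) le_rfl (by positivity) this

theorem stmt14g_inv (w : ℂ) (hw : 0 < w.re) :
    ‖(w - 1) / (w + 1)‖ < 1 ∧ stmt14g ((w - 1) / (w + 1)) = w := by
  have hne : w + 1 ≠ 0 := by
    intro h
    have : (w + 1).re = 0 := by rw [h]; simp
    simp at this
    linarith
  have hlt : ‖w - 1‖ < ‖w + 1‖ := by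
    have h1 : Complex.normSq (w - 1) < Complex.normSq (w + 1) := by
      simp [Complex.normSq_apply]
      nlinarith
    rw [← Complex.sq_norm, ← Complex.sq_norm] at h1
    have := norm_nonneg (w - 1)
    have := norm_nonneg (w + 1)
    nlinarith
  have hz : ‖(w - 1) / (w + 1)‖ < 1 := by
    rw [norm_div, div_lt_one (lt_of_le_of_lt (norm_nonneg _) hlt)]
    exact hlt
  refine ⟨hz, ?_⟩
  rw [stmt14g, div_eq_iff (stmt14_one_sub_ne _ hz)]
  field_simp
  ring
open Filter Topology Metric
open scoped ZeroAtInfty ENNReal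

theorem stmt14coord (x : C₀(ℕ, ℂ)) (n : ℕ) : ‖x n‖ ≤ ‖x‖ :=
  calc ‖x n‖ = ‖x.toBCF n‖ := rfl
    _ ≤ ‖x.toBCF‖ := x.toBCF.norm_coe_le_norm n
    _ = ‖x‖ := ZeroAtInftyContinuousMap.norm_toBCF_eq_norm

/-- for every `ε > 0` there are a holomorphic `f : B_{c₀} → ℂ` bounded by `1`
and a sequence `(x_k)` in `B_{c₀}` converging weakly (against `ℓ₁`) to `0` such that
`|f(x_k) − f(0)|` converges to a limit greater than `2 − ε`. -/
theorem stmt14 (ε : ℝ) (hε : 0 < ε) :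
    ∃ f : C₀(ℕ, ℂ) → ℂ, DifferentiableOn ℂ f (ball 0 1) ∧
      (∀ x ∈ ball (0 : C₀(ℕ, ℂ)) 1, ‖f x‖ ≤ 1) ∧
      ∃ x : ℕ → C₀(ℕ, ℂ), (∀ k, x k ∈ ball (0 : C₀(ℕ, ℂ)) 1) ∧
        (∀ a : lp (fun _ : ℕ => ℂ) 1,
          Tendsto (fun k => ∑' j, a j * x k j) atTop (nhds 0)) ∧
        ∃ L : ℝ, Tendsto (fun k => ‖f (x k) - f 0‖) atTop (nhds L) ∧ 2 - ε < L := by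
  set δ : ℝ := ε / 4 with hδdef
  have hδ : 0 < δ := by positivity
  set c : ℕ → ℝ := fun n => δ / 2 * (1 / 2) ^ n with hcdef
  have hc_pos : ∀ n, 0 < c n := fun n => by positivity
  have hc_sum : Summable c :=
    (summable_geometric_of_lt_one (by norm_num) (by norm_num)).mul_left _
  have hc_sumC : Summable (fun n => (c n : ℂ)) := Complex.summable_ofReal.2 hc_sum
  have hc_tsum : ∑' n, c n = δ := by
    rw [hcdef, tsum_mul_left, tsum_geometric_of_lt_one (by norm_num) (by norm_num)]
    norm_num
  have hc_lim : Tendsto c atTop (𝓝 0) := by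
    rw [hcdef]
    have h2 := tendsto_pow_atTop_nhds_zero_of_lt_one
      (by norm_num : (0:ℝ) ≤ 1/2) (by norm_num : (1/2:ℝ) < 1)
    simpa using h2.const_mul (δ/2)
  -- the function
  set h : C₀(ℕ, ℂ) → ℂ := fun x => ∑' n, (c n : ℂ) * stmt14g (x n) with hhdef
  have key_summable : ∀ (x : C₀(ℕ, ℂ)) (r : ℝ), r < 1 → ‖x‖ ≤ r →
      Summable (fun n => (c n : ℂ) * stmt14g (x n)) := by
    intro x r hr hx
    apply Summable.of_norm_bounded (g := fun n => c n * ((1 + r) / (1 - r)))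
      (hc_sum.mul_right _)
    intro n
    rw [norm_mul, Complex.norm_real, Real.norm_eq_abs, abs_of_pos (hc_pos n)]
    exact mul_le_mul_of_nonneg_left
      (stmt14g_norm_le _ r hr (le_trans (stmt14coord x n) hx)) (hc_pos n).le
  refine ⟨fun x => Complex.exp (-h x), ?_, ?_, ?_⟩
  · -- differentiability
    intro x₀ hx₀
    rw [mem_ball_zero_iff] at hx₀
    set r : ℝ := (‖x₀‖ + 1) / 2 with hrdef
    have hr1 : r < 1 := by rw [hrdef]; linarith
    have hx₀r : ‖x₀‖ < r := by rw [hrdef]; linarith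
    have hmain : HasFDerivAt h
        (∑' n, (((c n : ℂ) * (2 / (1 - (x₀ n)) ^ 2)) • stmt14ev n)) x₀ := by
      apply hasFDerivAt_tsum_of_isPreconnected
        (u := fun n => c n * (2 / (1 - r) ^ 2))
        (f' := fun n x => ((c n : ℂ) * (2 / (1 - (x n)) ^ 2)) • stmt14ev n)
        (hc_sum.mul_right _) isOpen_ball (convex_ball _ _).isPreconnected
        ?_ ?_ (mem_ball_zero_iff.2 hx₀r) ?_ (mem_ball_zero_iff.2 hx₀r)
      · intro n x hx
        rw [mem_ball_zero_iff] at hx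
        have hxn : ‖x n‖ < 1 := lt_trans (lt_of_le_of_lt (stmt14coord x n) hx) hr1
        have hg := stmt14g_hasDerivAt (x n) hxn
        have hcomp := (hg.comp_hasFDerivAt x (stmt14ev n).hasFDerivAt).const_mul ((c n : ℂ))
        rw [smul_smul] at hcomp
        exact hcomp
      · intro n x hx
        rw [mem_ball_zero_iff] at hx
        have hxn : ‖x n‖ ≤ r := le_trans (stmt14coord x n) hx.le
        rw [norm_smul, norm_mul, Complex.norm_real, Real.norm_eq_abs,
          abs_of_pos (hc_pos n)]
        calc c n * ‖(2:ℂ) / (1 - (x n)) ^ 2‖ * ‖stmt14ev n‖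
            ≤ c n * (2 / (1 - r) ^ 2) * 1 :=
              mul_le_mul (mul_le_mul_of_nonneg_left
                  (stmt14g_deriv_norm_le _ r hr1 hxn) (hc_pos n).le)
                (stmt14ev_norm n) (norm_nonneg (stmt14ev n)) (by positivity)
          _ = c n * (2 / (1 - r) ^ 2) := mul_one _
      · exact key_summable x₀ r hr1 hx₀r.le
    exact ((hmain.differentiableAt.neg).cexp).differentiableWithinAt
  · -- bound by 1
    intro x hx
    rw [mem_ball_zero_iff] at hx
    have hsum := key_summable x ‖x‖ hx le_rfl
    have hre : 0 ≤ (h x).re := by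
      rw [hhdef]
      simp only []
      rw [show (∑' n, (c n:ℂ) * stmt14g (x n)).re
          = ∑' n, ((c n:ℂ) * stmt14g (x n)).re from Complex.reCLM.map_tsum hsum]
      apply tsum_nonneg
      intro n
      rw [Complex.re_ofReal_mul]
      exact mul_nonneg (hc_pos n).le
        (stmt14g_re_nonneg _ (lt_of_le_of_lt (stmt14coord x n) hx))
    rw [Complex.norm_exp, Real.exp_le_one_iff]
    simp only [Complex.neg_re]
    linarith
  · -- the sequence
    set w : ℕ → ℂ := fun k => ((c k)⁻¹ : ℝ) * ((δ : ℂ) + Real.pi * Complex.I) with hwdef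
    have hw_re : ∀ k, 0 < (w k).re := by
      intro k
      rw [hwdef]
      simp only [Complex.re_ofReal_mul, Complex.add_re, Complex.ofReal_re,
        Complex.mul_re, Complex.I_re, Complex.I_im, Complex.ofReal_im]
      nlinarith [mul_pos (inv_pos.2 (hc_pos k)) hδ]
    set z : ℕ → ℂ := fun k => (w k - 1) / (w k + 1) with hzdef
    have hz1 : ∀ k, ‖z k‖ < 1 := fun k => (stmt14g_inv (w k) (hw_re k)).1
    have hgz : ∀ k, stmt14g (z k) = w k := fun k => (stmt14g_inv (w k) (hw_re k)).2
    set xseq : ℕ → C₀(ℕ, ℂ) := fun k => stmt14bump k (z k) with hxseqdef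
    have hmem : ∀ k, xseq k ∈ ball (0 : C₀(ℕ, ℂ)) 1 := by
      intro k
      rw [mem_ball_zero_iff]
      exact lt_of_le_of_lt (stmt14bump_norm_le k (z k)) (hz1 k)
    refine ⟨xseq, hmem, ?_, ?_⟩
    · -- weak convergence
      intro a
      have hterm : ∀ k, (∑' j, a j * (xseq k) j) = a k * z k := by
        intro k
        have heq : ∀ j, a j * (xseq k) j = if j = k then a k * z k else 0 := by
          intro j
          rw [hxseqdef]
          simp only []
          rw [stmt14bump_apply]
          by_cases hj : j = k
          · subst hj; simp
          · simp [hj]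
        rw [tsum_congr heq, tsum_ite_eq]
      rw [show (fun k => ∑' j, a j * (xseq k) j) = fun k => a k * z k from funext hterm]
      have hasum : Summable (fun j => ‖a j‖) := by
        have := (lp.memℓp a).summable (by simp : 0 < (1 : ℝ≥0∞).toReal)
        simpa using this
      refine squeeze_zero_norm (fun k => ?_) hasum.tendsto_atTop_zero
      · rw [norm_mul]
        calc ‖a k‖ * ‖z k‖ ≤ ‖a k‖ * 1 :=
              mul_le_mul_of_nonneg_left (hz1 k).le (norm_nonneg _)
          _ = ‖a k‖ := mul_one _
    · -- the limit
      have h0val : h 0 = (δ : ℂ) := by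
        rw [hhdef]
        simp only []
        rw [tsum_congr (fun n => ?_), ← Complex.ofReal_tsum, hc_tsum]
        show (c n : ℂ) * stmt14g ((0 : C₀(ℕ, ℂ)) n) = (c n : ℂ)
        rw [show ((0 : C₀(ℕ, ℂ)) n) = 0 from rfl, stmt14g_zero, mul_one]
      have hckw : ∀ k, (c k : ℂ) * w k = (δ : ℂ) + Real.pi * Complex.I := by
        intro k
        rw [hwdef]
        rw [← mul_assoc, ← Complex.ofReal_mul, mul_inv_cancel₀ (hc_pos k).ne']
        simp
      have hxval : ∀ k, h (xseq k) = ((2 * δ - c k : ℝ) : ℂ) + Real.pi * Complex.I := by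
        intro k
        have hterm : ∀ n, (c n : ℂ) * stmt14g ((xseq k) n)
            = (c n : ℂ) + (if n = k then (c k : ℂ) * (w k - 1) else 0) := by
          intro n
          rw [hxseqdef]
          simp only []
          rw [stmt14bump_apply]
          by_cases hn : n = k
          · subst hn
            rw [if_pos rfl, if_pos rfl, hgz n]
            ring
          · rw [if_neg hn, if_neg hn, stmt14g_zero, mul_one, add_zero]
        rw [hhdef]
        simp only []
        rw [tsum_congr hterm, Summable.tsum_add hc_sumC ⟨_, hasSum_ite_eq k _⟩,
          ← Complex.ofReal_tsum, hc_tsum, tsum_ite_eq, mul_sub, hckw k]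
        push_cast
        ring
      set L : ℝ := Real.exp (-(2 * δ)) + Real.exp (-δ) with hLdef
      refine ⟨L, ?_, ?_⟩
      · have hfk : ∀ k, ‖Complex.exp (-h (xseq k)) - Complex.exp (-h 0)‖
            = Real.exp (c k - 2 * δ) + Real.exp (-δ) := by
          intro k
          rw [hxval k, h0val]
          rw [neg_add, Complex.exp_add]
          rw [show -(((2 * δ - c k : ℝ) : ℂ)) = ((c k - 2 * δ : ℝ) : ℂ) by push_cast; ring]
          rw [show -(((δ : ℝ) : ℂ)) = ((-δ : ℝ) : ℂ) by push_cast; ring]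
          rw [← Complex.ofReal_exp, ← Complex.ofReal_exp]
          rw [show Complex.exp (-(Real.pi * Complex.I)) = -1 by
            rw [Complex.exp_neg, Complex.exp_pi_mul_I]; norm_num]
          rw [show ((Real.exp (c k - 2 * δ) : ℝ) : ℂ) * (-1) - ((Real.exp (-δ) : ℝ) : ℂ)
              = -(((Real.exp (c k - 2 * δ) + Real.exp (-δ) : ℝ) : ℂ)) by push_cast; ring]
          rw [norm_neg, Complex.norm_real, Real.norm_eq_abs, abs_of_pos (by positivity)]
        simp only [hfk]
        have h1 : Tendsto (fun k => c k - 2 * δ) atTop (𝓝 (-(2 * δ))) := by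
          have := hc_lim.sub_const (2 * δ)
          simpa using this
        have h2 : Tendsto (fun k => Real.exp (c k - 2 * δ)) atTop (𝓝 (Real.exp (-(2 * δ)))) :=
          (Real.continuous_exp.tendsto _).comp h1
        rw [hLdef]
        exact h2.add_const _
      · have e1 : 1 - 2 * δ ≤ Real.exp (-(2 * δ)) := by
          have := Real.add_one_le_exp (-(2 * δ)); linarith
        have e2 : 1 - δ ≤ Real.exp (-δ) := by
          have := Real.add_one_le_exp (-δ); linarith
        rw [hLdef, hδdef] at *
        linarith
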